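/- arXiv:2209.01821 — 8 statements merged into one kernel-verified Lean document; each statement's English description precedes it below -/
import Mathlib

section
/- Let Hypothesis (L) hold and suppose $K(x,y)$ is $Y_+$-positive for all $x \in \Omega$ and $\mu$-almost all $y \in \Omega$. If every nonempty open subset of $\Omega$ has positive $\mu$-measure, and there exists $\bar x \in \Omega$ such that $K(\bar x, \cdot)$ is continuous on $\Omega$ and $K(\bar x, y)$ is $Y_+$-injective for $\mu$-almost all $y \in \Omega$, then the Fredholm operator $\mathscr{K}$ is strictly $C(\Omega)^d_+$-positive, i.e. $\mathscr{K}(C(\Omega)^d_+ \setminus \{0\}) \subseteq C(\Omega)^d_+ \setminus \{0\}$. -/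
open MeasureTheory

/-- An order cone in a real topological vector space. -/
def IsOrderCone {E : Type*} [AddCommGroup E] [Module ℝ E] [TopologicalSpace E]
    (C : Set E) : Prop :=
  C.Nonempty ∧ IsClosed C ∧ Convex ℝ C ∧
    (∀ t : ℝ, 0 ≤ t → ∀ x ∈ C, t • x ∈ C) ∧ C ∩ (-C) = {0}

/-- If a property holds a.e. w.r.t. a measure positive on nonempty open sets, and the set
where it holds is closed, then it holds everywhere. -/
lemma everywhere_of_ae_of_closed {Ω : Type*} [TopologicalSpace Ω] [MeasurableSpace Ω]
    {μ : Measure Ω} (hopen : ∀ U : Set Ω, IsOpen U → U.Nonempty → 0 < μ U)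
    {p : Ω → Prop} (hae : ∀ᵐ y ∂μ, p y) (hcl : IsClosed {y | p y}) : ∀ y, p y := by
  by_contra h
  push_neg at h
  obtain ⟨y₀, hy₀⟩ := h
  have hU : IsOpen {y | ¬ p y} := isOpen_compl_iff.mpr hcl
  have hpos := hopen _ hU ⟨y₀, hy₀⟩
  have : μ {y | ¬ p y} = 0 := hae
  simp [this] at hpos

/-- A point of a pointed closed convex cone, other than `0`, is strictly separated from `-Y`
by a functional nonnegative on `Y`. -/
lemma exists_functional {d : ℕ} {Y : Set (EuclideanSpace ℝ (Fin d))} (hY : IsOrderCone Y)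
    {v : EuclideanSpace ℝ (Fin d)} (hv : v ∈ Y) (hvne : v ≠ 0) :
    ∃ f : EuclideanSpace ℝ (Fin d) →L[ℝ] ℝ, (∀ w ∈ Y, 0 ≤ f w) ∧ 0 < f v := by
  have h0Y : (0 : EuclideanSpace ℝ (Fin d)) ∈ Y ∩ (-Y) := by
    rw [hY.2.2.2.2]; rfl
  have hvnY : v ∉ -Y := by
    intro hmem
    have : v ∈ Y ∩ (-Y) := ⟨hv, hmem⟩
    rw [hY.2.2.2.2] at this
    exact hvne this
  obtain ⟨f, c, hfc, hcv⟩ :=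
    geometric_hahn_banach_closed_point hY.2.2.1.neg hY.2.1.neg hvnY
  have hc0 : 0 < c := by
    have := hfc 0 h0Y.2
    simpa using this
  refine ⟨f, ?_, lt_trans hc0 hcv⟩
  intro w hw
  by_contra hneg
  push_neg at hneg
  set t : ℝ := (c + 1) / (-f w) with ht
  have hfw : 0 < -f w := by linarith
  have htpos : 0 ≤ t := le_of_lt (div_pos (by linarith) hfw)
  have hmem : -(t • w) ∈ -Y := by
    simpa using hY.2.2.2.1 t htpos w hw
  have := hfc _ hmem
  rw [map_neg, f.map_smul] at this
  have heq : t * f w = -(c + 1) := by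
    rw [ht, div_mul_eq_mul_div, div_neg, mul_div_assoc, div_self (ne_of_lt hneg), mul_one]
  simp only [smul_eq_mul] at this
  rw [heq] at this
  linarith

/-- Under Hypothesis (L) and `Y₊`-positivity of the kernel, if nonempty open subsets of
`Ω` have positive measure and there is `xb ∈ Ω` such that `K(xb,·)` is continuous and
`K(xb,y)` is `Y₊`-injective for `μ`-a.a. `y`, then the Fredholm operator `𝒦` is strictly
`C(Ω)^d₊`-positive. -/
theorem stmt3 {d : ℕ} {Ω : Type*} [MetricSpace Ω] [CompactSpace Ω]
    [MeasurableSpace Ω] [OpensMeasurableSpace Ω]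
    (μ : Measure Ω) [IsFiniteMeasure μ]
    (Y : Set (EuclideanSpace ℝ (Fin d))) (hY : IsOrderCone Y)
    (K : Ω → Ω → EuclideanSpace ℝ (Fin d) →L[ℝ] EuclideanSpace ℝ (Fin d))
    (hKmeas : ∀ x, AEStronglyMeasurable (K x) μ)
    (hKint : ∀ x, Integrable (K x) μ)
    (hKbdd : ∃ M : ℝ, ∀ x, (∫ y, ‖K x y‖ ∂μ) ≤ M)
    (hKcont : ∀ x₀, Filter.Tendsto (fun x => ∫ y, ‖K x y - K x₀ y‖ ∂μ)
      (nhds x₀) (nhds 0))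
    (hKpos : ∀ x, ∀ᵐ y ∂μ, ∀ v ∈ Y, K x y v ∈ Y)
    (hopen : ∀ U : Set Ω, IsOpen U → U.Nonempty → 0 < μ U)
    (hinj : ∃ xb : Ω, Continuous (K xb) ∧
      ∀ᵐ y ∂μ, ∀ v ∈ Y, K xb y v = 0 → v = 0)
    (u : C(Ω, EuclideanSpace ℝ (Fin d))) (hu : ∀ x, u x ∈ Y) (hune : u ≠ 0) :
    (∀ x, (∫ y, K x y (u y) ∂μ) ∈ Y) ∧
      (fun x => ∫ y, K x y (u y) ∂μ) ≠ 0 := by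
  obtain ⟨x₀, hx₀⟩ := DFunLike.ne_iff.mp hune
  have h0Y : (0 : EuclideanSpace ℝ (Fin d)) ∈ Y := by
    have h : (0 : EuclideanSpace ℝ (Fin d)) ∈ Y ∩ (-Y) := by rw [hY.2.2.2.2]; rfl
    exact h.1
  have hμ : μ ≠ 0 := by
    intro h
    have := hopen Set.univ isOpen_univ ⟨x₀, trivial⟩
    rw [h] at this
    simp at this
  haveI : NeZero μ := ⟨hμ⟩
  -- measurability & integrability of the integrand
  have hmeas : ∀ x, AEStronglyMeasurable (fun y => K x y (u y)) μ := fun x =>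
    isBoundedBilinearMap_apply.continuous.comp_aestronglyMeasurable
      ((hKmeas x).prodMk u.continuous.aestronglyMeasurable)
  have hint : ∀ x, Integrable (fun y => K x y (u y)) μ := by
    intro x
    refine ((hKint x).norm.mul_const ‖u‖).mono' (hmeas x) ?_
    filter_upwards with y
    calc ‖K x y (u y)‖ ≤ ‖K x y‖ * ‖u y‖ := (K x y).le_opNorm _
      _ ≤ ‖K x y‖ * ‖u‖ := by
          gcongr
          exact u.norm_coe_le_norm y
  -- part 1: the integral lies in Y
  have hmem : ∀ x, (∫ y, K x y (u y) ∂μ) ∈ Y := by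
    intro x
    have hae : ∀ᵐ y ∂μ, K x y (u y) ∈ Y := (hKpos x).mono fun y h => h _ (hu y)
    have havg := hY.2.2.1.average_mem hY.2.1 hae (hint x)
    rw [average_eq] at havg
    have hne : (μ Set.univ).toReal ≠ 0 := by
      simp [ENNReal.toReal_eq_zero_iff, hμ, measure_ne_top μ Set.univ,
        Measure.measure_univ_eq_zero]
    have h2 : (∫ y, K x y (u y) ∂μ)
        = (μ Set.univ).toReal • ((μ Set.univ).toReal⁻¹ • ∫ y, K x y (u y) ∂μ) := by
      rw [smul_smul, mul_inv_cancel₀ hne, one_smul]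
    rw [h2]
    exact hY.2.2.2.1 _ ENNReal.toReal_nonneg _ havg
  refine ⟨hmem, ?_⟩
  intro hF
  obtain ⟨xb, hKc, hKinj⟩ := hinj
  have hIb : (∫ y, K xb y (u y) ∂μ) = 0 := congrFun hF xb
  set g : Ω → EuclideanSpace ℝ (Fin d) := fun y => K xb y (u y) with hgdef
  have hgc : Continuous g :=
    isBoundedBilinearMap_apply.continuous.comp (hKc.prodMk u.continuous)
  -- g takes values in Y everywhere
  have hgY : ∀ y, g y ∈ Y := by
    refine everywhere_of_ae_of_closed hopen
      ((hKpos xb).mono fun y h => h _ (hu y)) ?_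
    exact IsClosed.preimage hgc hY.2.1
  -- g vanishes everywhere
  have hgz : ∀ y, g y = 0 := by
    intro y₀
    by_contra hy₀
    obtain ⟨f, hfY, hfv⟩ := exists_functional hY (hgY y₀) hy₀
    have hfg0 : ∀ᵐ y ∂μ, f (g y) = 0 := by
      have hnn : 0 ≤ᵐ[μ] fun y => f (g y) :=
        Filter.Eventually.of_forall fun y => hfY _ (hgY y)
      have hfi : Integrable (fun y => f (g y)) μ := f.integrable_comp (hint xb)
      have hI0 : (∫ y, f (g y) ∂μ) = 0 := by
        rw [f.integral_comp_comm (hint xb), hIb, map_zero]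
      have := (integral_eq_zero_iff_of_nonneg_ae hnn hfi).mp hI0
      filter_upwards [this] with y hy using hy
    have : ∀ y, f (g y) = 0 :=
      everywhere_of_ae_of_closed hopen hfg0
        (isClosed_eq (f.continuous.comp hgc) continuous_const)
    exact absurd (this y₀) (ne_of_gt hfv)
  -- hence u vanishes everywhere, contradiction
  have huz : ∀ y, u y = 0 := by
    refine everywhere_of_ae_of_closed hopen
      (hKinj.mono fun y h => h _ (hu y) (hgz y)) ?_
    exact isClosed_eq u.continuous continuous_const
  exact hx₀ (huz x₀)
end

section
/- Let Hypothesis (L) hold and suppose $K(x,y)$ is $Y_+$-positive for all $x \in \Omega$ and $\mu$-almost all $y \in \Omega$. If $\mu(\Omega) > 0$, $Y_+$ is solid, and $K(x,y)Y_+^{\circ} \subseteq Y_+^{\circ}$ for all $x \in \Omega$ and $\mu$-almost all $y \in \Omega$, then the Fredholm operator $\mathscr{K}$ maps the interior of $C(\Omega)^d_+$ into the interior of $C(\Omega)^d_+$. -/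
open MeasureTheory

section Aux

variable {α : Type*} [MeasurableSpace α] {E : Type*} [NormedAddCommGroup E]
  [NormedSpace ℝ E] [CompleteSpace E]

/-- Positive scalars map the interior of a convex cone into itself. -/
lemma cone_interior_smul {Y : Set E} (hcone : ∀ t : ℝ, 0 ≤ t → ∀ x ∈ Y, t • x ∈ Y)
    {t : ℝ} (ht : 0 < t) {a : E} (ha : a ∈ interior Y) : t • a ∈ interior Y := by
  have hopen : IsOpen ((fun z : E => t • z) '' interior Y) :=
    (isOpenMap_smul₀ ht.ne') _ isOpen_interior
  have hsub : (fun z : E => t • z) '' interior Y ⊆ Y := by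
    rintro _ ⟨z, hz, rfl⟩
    exact hcone t ht.le z (interior_subset hz)
  exact interior_maximal hsub hopen ⟨a, ha, rfl⟩

/-- The integral of an integrable function taking values a.e. in the interior of a solid
convex cone lies in the interior, provided the measure is nonzero and finite. -/
lemma integral_mem_interior_cone (μ : Measure α) [IsFiniteMeasure μ]
    (hμ : 0 < μ Set.univ) {Y : Set E} (hconv : Convex ℝ Y)
    (hcone : ∀ t : ℝ, 0 ≤ t → ∀ x ∈ Y, t • x ∈ Y)
    (hsolid : (interior Y).Nonempty)
    {f : α → E} (hf : Integrable f μ) (hmem : ∀ᵐ y ∂μ, f y ∈ interior Y) :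
    (∫ y, f y ∂μ) ∈ interior Y := by
  by_contra hm
  obtain ⟨ℓ, hℓ⟩ :=
    geometric_hahn_banach_open_point hconv.interior isOpen_interior hm
  set m := ∫ y, f y ∂μ with hm_def
  -- `ℓ` is nonpositive on the interior of the cone
  have hle : ∀ a ∈ interior Y, ℓ a ≤ 0 := by
    intro a ha
    by_contra h
    push_neg at h
    set t := max 1 (ℓ m / ℓ a + 1) with ht_def
    have ht : 0 < t := lt_of_lt_of_le one_pos (le_max_left _ _)
    have h1 := hℓ _ (cone_interior_smul hcone ht ha)
    rw [ContinuousLinearMap.map_smul, smul_eq_mul] at h1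
    have h2 : ℓ m / ℓ a + 1 ≤ t := le_max_right _ _
    have h3 : (ℓ m / ℓ a + 1) * ℓ a ≤ t * ℓ a := mul_le_mul_of_nonneg_right h2 h.le
    rw [add_mul, one_mul, div_mul_cancel₀ _ h.ne'] at h3
    linarith
  -- `ℓ m` is nonnegative
  have hm0 : 0 ≤ ℓ m := by
    obtain ⟨a, ha⟩ := hsolid
    have hlt : ∀ n : ℕ, (1 / ((n : ℝ) + 1)) * ℓ a < ℓ m := by
      intro n
      have := hℓ _ (cone_interior_smul hcone (by positivity : (0:ℝ) < 1 / ((n:ℝ)+1)) ha)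
      rwa [ContinuousLinearMap.map_smul, smul_eq_mul] at this
    have hta : Filter.Tendsto (fun n : ℕ => (1 / ((n : ℝ) + 1)) * ℓ a)
        Filter.atTop (nhds 0) := by
      simpa using tendsto_one_div_add_atTop_nhds_zero_nat.mul_const (ℓ a)
    exact le_of_tendsto hta (Filter.Eventually.of_forall fun n => (hlt n).le)
  have hℓint : Integrable (fun y => ℓ (f y)) μ := ℓ.integrable_comp hf
  have hint : ∫ y, ℓ (f y) ∂μ = ℓ m := ℓ.integral_comp_comm hf
  have hae_lt : ∀ᵐ y ∂μ, ℓ (f y) < ℓ m := hmem.mono fun y hy => hℓ _ hy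
  have hae_le : ∀ᵐ y ∂μ, ℓ (f y) ≤ 0 := hmem.mono fun y hy => hle _ hy
  have hm_eq : ℓ m = 0 :=
    le_antisymm (hint ▸ integral_nonpos_of_ae hae_le) hm0
  have hneg : ∀ᵐ y ∂μ, 0 < -ℓ (f y) := by
    filter_upwards [hae_lt] with y hy
    rw [hm_eq] at hy; linarith
  have hpos : 0 < ∫ y, -ℓ (f y) ∂μ := by
    rw [integral_pos_iff_support_of_nonneg_ae (hneg.mono fun y hy => hy.le) hℓint.neg]
    set S := Function.support fun y => -ℓ (f y) with hS
    have hcompl : μ Sᶜ = 0 := by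
      have : ∀ᵐ y ∂μ, y ∈ S := hneg.mono fun y hy => by
        simp only [hS, Function.mem_support]; exact hy.ne'
      exact ae_iff.mp this
    have huniv : μ Set.univ ≤ μ S + μ Sᶜ := by
      rw [← Set.union_compl_self S]; exact measure_union_le S Sᶜ
    rw [hcompl, add_zero] at huniv
    exact lt_of_lt_of_le hμ huniv
  rw [integral_neg, hint, hm_eq, neg_zero] at hpos
  exact lt_irrefl 0 hpos

end Aux

/-- Under Hypothesis (L) and `Y₊`-positivity of the kernel, if `μ(Ω) > 0`, `Y₊` is solid
and `K(x,y) Y₊° ⊆ Y₊°` for all `x` and `μ`-a.a. `y`, then the Fredholm operator `𝒦`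
maps the interior of `C(Ω)^d₊` into the interior of `C(Ω)^d₊`. -/
theorem stmt5 {d : ℕ} {Ω : Type*} [MetricSpace Ω] [CompactSpace Ω]
    [MeasurableSpace Ω] [OpensMeasurableSpace Ω]
    (μ : Measure Ω) [IsFiniteMeasure μ] (hμ : 0 < μ Set.univ)
    (Y : Set (EuclideanSpace ℝ (Fin d))) (hY : IsOrderCone Y)
    (hsolid : (interior Y).Nonempty)
    (K : Ω → Ω → EuclideanSpace ℝ (Fin d) →L[ℝ] EuclideanSpace ℝ (Fin d))
    (hKmeas : ∀ x, AEStronglyMeasurable (K x) μ)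
    (hKint : ∀ x, Integrable (K x) μ)
    (hKbdd : ∃ M : ℝ, ∀ x, (∫ y, ‖K x y‖ ∂μ) ≤ M)
    (hKcont : ∀ x₀, Filter.Tendsto (fun x => ∫ y, ‖K x y - K x₀ y‖ ∂μ)
      (nhds x₀) (nhds 0))
    (hKpos : ∀ x, ∀ᵐ y ∂μ, ∀ v ∈ Y, K x y v ∈ Y)
    (hKintr : ∀ x, ∀ᵐ y ∂μ, ∀ v ∈ interior Y, K x y v ∈ interior Y)
    (u : C(Ω, EuclideanSpace ℝ (Fin d)))
    (hu : u ∈ interior {w : C(Ω, EuclideanSpace ℝ (Fin d)) | ∀ x, w x ∈ Y}) :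
    ∃ v : C(Ω, EuclideanSpace ℝ (Fin d)),
      (∀ x, v x = ∫ y, K x y (u y) ∂μ) ∧
      v ∈ interior {w : C(Ω, EuclideanSpace ℝ (Fin d)) | ∀ x, w x ∈ Y} := by
  obtain ⟨-, -, hconv, hcone, -⟩ := hY
  -- u takes values in the interior of Y
  have huInt : ∀ x, u x ∈ interior Y := by
    intro x₀
    rw [mem_interior_iff_mem_nhds, Metric.mem_nhds_iff] at hu
    obtain ⟨ε, hε, hball⟩ := hu
    rw [mem_interior_iff_mem_nhds, Metric.mem_nhds_iff]
    refine ⟨ε, hε, fun z hz => ?_⟩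
    have hw : u + ContinuousMap.const Ω (z - u x₀) ∈ Metric.ball u ε := by
      rw [Metric.mem_ball, dist_comm]
      have : dist u (u + ContinuousMap.const Ω (z - u x₀)) ≤ dist (u x₀) z := by
        rw [ContinuousMap.dist_le dist_nonneg]
        intro x
        simp only [ContinuousMap.add_apply, ContinuousMap.const_apply]
        rw [dist_eq_norm, dist_eq_norm]
        simp [norm_sub_rev]
      calc dist u (u + ContinuousMap.const Ω (z - u x₀)) ≤ dist (u x₀) z := this
        _ < ε := by rw [dist_comm]; exact Metric.mem_ball.mp hz
    have := hball hw x₀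
    simpa using this
  -- integrability of the integrand
  have hInt : ∀ x, Integrable (fun y => K x y (u y)) μ := by
    intro x
    have hmeas : AEStronglyMeasurable (fun y => K x y (u y)) μ := by
      have h1 : AEStronglyMeasurable (fun y => (K x y, u y)) μ :=
        (hKmeas x).prodMk u.continuous.aestronglyMeasurable
      exact isBoundedBilinearMap_apply.continuous.comp_aestronglyMeasurable h1
    refine Integrable.mono' (((hKint x).norm).mul_const ‖u‖) hmeas ?_
    filter_upwards with y
    calc ‖K x y (u y)‖ ≤ ‖K x y‖ * ‖u y‖ := (K x y).le_opNorm _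
      _ ≤ ‖K x y‖ * ‖u‖ :=
        mul_le_mul_of_nonneg_left (u.norm_coe_le_norm y) (norm_nonneg _)
  -- the candidate function and its continuity
  set V : Ω → EuclideanSpace ℝ (Fin d) := fun x => ∫ y, K x y (u y) ∂μ with hV_def
  have hVcont : Continuous V := by
    rw [continuous_iff_continuousAt]
    intro x₀
    rw [ContinuousAt, tendsto_iff_norm_sub_tendsto_zero]
    have hbound : ∀ x, ‖V x - V x₀‖ ≤ (∫ y, ‖K x y - K x₀ y‖ ∂μ) * ‖u‖ := by
      intro x
      have hsub : V x - V x₀ = ∫ y, (K x y (u y) - K x₀ y (u y)) ∂μ := by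
        rw [hV_def]; exact (integral_sub (hInt x) (hInt x₀)).symm
      rw [hsub]
      calc ‖∫ y, (K x y (u y) - K x₀ y (u y)) ∂μ‖
          ≤ ∫ y, ‖K x y (u y) - K x₀ y (u y)‖ ∂μ := norm_integral_le_integral_norm _
        _ ≤ ∫ y, ‖K x y - K x₀ y‖ * ‖u‖ ∂μ := by
            refine integral_mono ((hInt x).sub (hInt x₀)).norm
              ((((hKint x).sub (hKint x₀)).norm).mul_const ‖u‖) fun y => ?_
            calc ‖K x y (u y) - K x₀ y (u y)‖ = ‖(K x y - K x₀ y) (u y)‖ := by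
                  simp [ContinuousLinearMap.sub_apply]
              _ ≤ ‖K x y - K x₀ y‖ * ‖u y‖ := (K x y - K x₀ y).le_opNorm _
              _ ≤ ‖K x y - K x₀ y‖ * ‖u‖ :=
                  mul_le_mul_of_nonneg_left (u.norm_coe_le_norm y) (norm_nonneg _)
        _ = (∫ y, ‖K x y - K x₀ y‖ ∂μ) * ‖u‖ := integral_mul_const _ _
    have hten : Filter.Tendsto (fun x => (∫ y, ‖K x y - K x₀ y‖ ∂μ) * ‖u‖)
        (nhds x₀) (nhds 0) := by
      have h := (hKcont x₀).mul_const ‖u‖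
      rwa [zero_mul] at h
    exact squeeze_zero (fun x => norm_nonneg _) hbound hten
  set v : C(Ω, EuclideanSpace ℝ (Fin d)) := ⟨V, hVcont⟩ with hv_def
  refine ⟨v, fun x => rfl, ?_⟩
  -- v takes values in the interior of Y
  have hvInt : ∀ x, v x ∈ interior Y := by
    intro x
    refine integral_mem_interior_cone μ hμ hconv hcone hsolid (hInt x) ?_
    filter_upwards [hKintr x] with y hy
    exact hy _ (huInt y)
  -- conclude via a uniform thickening argument
  have hcomp : IsCompact (Set.range v) := isCompact_range v.continuous
  have hrange : Set.range v ⊆ interior Y := by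
    rintro _ ⟨x, rfl⟩; exact hvInt x
  obtain ⟨δ, hδ, hthick⟩ :=
    hcomp.exists_thickening_subset_open isOpen_interior hrange
  rw [mem_interior_iff_mem_nhds, Metric.mem_nhds_iff]
  refine ⟨δ, hδ, fun w hw x => ?_⟩
  have hwx : w x ∈ Metric.thickening δ (Set.range v) := by
    rw [Metric.mem_thickening_iff]
    refine ⟨v x, ⟨x, rfl⟩, ?_⟩
    calc dist (w x) (v x) ≤ dist w v := ContinuousMap.dist_apply_le_dist x
      _ < δ := Metric.mem_ball.mp hw
  exact interior_subset (hthick hwx)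
end

section
/- Let Hypothesis (L²) hold with $Y_+ \subset \mathbb{R}^d$ an orthant. If $K(x,y)$ is $Y_+$-positive and $Y_+$-injective (equivalently, strictly $Y_+$-positive) for $\mu$-almost all $x, y \in \Omega$, then the Fredholm operator $\mathscr{K} \in L(L^2(\Omega)^d)$ is strictly $L^2(\Omega)^d_+$-positive, i.e. $\mathscr{K}(L^2(\Omega)^d_+ \setminus \{0\}) \subseteq L^2(\Omega)^d_+ \setminus \{0\}$. -/
open MeasureTheory
open scoped ENNReal

/-- Under Hypothesis (L²) with an orthant `Y₊ ⊂ ℝ^d`, if `K(x,y)` is strictly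
`Y₊`-positive (i.e. `Y₊`-positive and `Y₊`-injective) for `μ`-a.a. `x, y`, then the
Fredholm operator `𝒦` on `L²(Ω)^d` is strictly `L²(Ω)^d₊`-positive. -/
theorem stmt9 {d : ℕ} {Ω : Type*} [MeasurableSpace Ω]
    (μ : Measure Ω) [IsFiniteMeasure μ] (hμ : 0 < μ Set.univ)
    (ς : Fin d → ℝ) (hς : ∀ i, ς i = 1 ∨ ς i = -1)
    (Y : Set (EuclideanSpace ℝ (Fin d)))
    (hY : Y = {y : EuclideanSpace ℝ (Fin d) | ∀ i, 0 ≤ ς i * y i})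
    (K : Ω → Ω → EuclideanSpace ℝ (Fin d) →L[ℝ] EuclideanSpace ℝ (Fin d))
    (hKmeas : AEStronglyMeasurable (fun q : Ω × Ω => K q.1 q.2) (μ.prod μ))
    (hKL2 : (∫⁻ x, ∫⁻ y, (‖K x y‖₊ : ℝ≥0∞) ^ 2 ∂μ ∂μ) < ∞)
    (hKpos : ∀ᵐ q : Ω × Ω ∂μ.prod μ, ∀ v ∈ Y, K q.1 q.2 v ∈ Y)
    (hKinj : ∀ᵐ q : Ω × Ω ∂μ.prod μ, ∀ v ∈ Y, K q.1 q.2 v = 0 → v = 0)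
    (u : Ω → EuclideanSpace ℝ (Fin d)) (hu : MemLp u 2 μ)
    (hupos : ∀ᵐ x ∂μ, u x ∈ Y) (hune : ¬ (u =ᵐ[μ] 0)) :
    (∀ᵐ x ∂μ, (∫ y, K x y (u y) ∂μ) ∈ Y) ∧
      ¬ ((fun x => ∫ y, K x y (u y) ∂μ) =ᵐ[μ] 0) := by
  -- measurability of the full integrand on the product space
  have husnd : AEStronglyMeasurable (fun q : Ω × Ω => u q.2) (μ.prod μ) :=
    hu.aestronglyMeasurable.comp_quasiMeasurePreserving
      MeasureTheory.Measure.quasiMeasurePreserving_snd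
  have hasm : AEStronglyMeasurable (fun q : Ω × Ω => K q.1 q.2 (u q.2)) (μ.prod μ) :=
    isBoundedBilinearMap_apply.continuous.comp_aestronglyMeasurable (hKmeas.prodMk husnd)
  -- a.e. x, the row y ↦ K x y is in L²
  have hKrow2 : ∀ᵐ x ∂μ, (∫⁻ y, (‖K x y‖₊ : ℝ≥0∞) ^ 2 ∂μ) < ∞ := by
    have hmk := hKmeas.ae_eq_mk
    have hmeasG : Measurable fun x => ∫⁻ y, (‖hKmeas.mk _ (x, y)‖₊ : ℝ≥0∞) ^ 2 ∂μ :=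
      (hKmeas.stronglyMeasurable_mk.enorm.pow_const 2).lintegral_prod_right'
    have haeF : AEMeasurable (fun x => ∫⁻ y, (‖K x y‖₊ : ℝ≥0∞) ^ 2 ∂μ) μ := by
      refine ⟨_, hmeasG, ?_⟩
      filter_upwards [MeasureTheory.Measure.ae_ae_of_ae_prod hmk] with x hx
      refine lintegral_congr_ae ?_
      filter_upwards [hx] with y hy
      rw [hy]
    exact ae_lt_top' haeF hKL2.ne
  -- a.e. x, rows of K are a.e. strongly measurable in y
  have hKrowmeas : ∀ᵐ x ∂μ, AEStronglyMeasurable (fun y => K x y) μ :=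
    hKmeas.prodMk_left
  have hasmrow : ∀ᵐ x ∂μ, AEStronglyMeasurable (fun y => K x y (u y)) μ :=
    hasm.prodMk_left
  -- u in L² : lintegral of squared norm finite
  have hu2 : (∫⁻ y, (‖u y‖₊ : ℝ≥0∞) ^ 2 ∂μ) < ∞ := by
    have h := hu.2
    rw [eLpNorm_eq_lintegral_rpow_enorm_toReal two_ne_zero ENNReal.ofNat_ne_top] at h
    simp only [enorm_eq_nnnorm] at h
    simp only [ENNReal.toReal_ofNat, one_div] at h
    have h2 := (ENNReal.rpow_lt_top_iff_of_pos (by norm_num : (0:ℝ) < 2⁻¹)).mp h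
    have heq : (∫⁻ y, (‖u y‖₊ : ℝ≥0∞) ^ (2 : ℝ) ∂μ) = ∫⁻ y, (‖u y‖₊ : ℝ≥0∞) ^ 2 ∂μ :=
      lintegral_congr fun y => by rw [← ENNReal.rpow_natCast]; norm_num
    rwa [heq] at h2
  -- a.e. x, y ↦ K x y (u y) is integrable
  have hint : ∀ᵐ x ∂μ, Integrable (fun y => K x y (u y)) μ := by
    filter_upwards [hKrow2, hasmrow, hKrowmeas] with x hx hxm hxK
    refine ⟨hxm, ?_⟩
    have hfin : (∫⁻ y, (‖K x y (u y)‖₊ : ℝ≥0∞) ∂μ) < ∞ := by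
      calc (∫⁻ y, (‖K x y (u y)‖₊ : ℝ≥0∞) ∂μ)
          ≤ ∫⁻ y, ((‖K x y‖₊ : ℝ≥0∞) ^ 2 + (‖u y‖₊ : ℝ≥0∞) ^ 2) ∂μ := by
            refine lintegral_mono fun y => ?_
            have h1 : (‖K x y (u y)‖₊ : ℝ≥0∞) ≤ (‖K x y‖₊ : ℝ≥0∞) * ‖u y‖₊ := by
              rw [← ENNReal.coe_mul]
              exact_mod_cast (K x y).le_opNorm (u y)
            refine h1.trans ?_
            rcases le_total (‖K x y‖₊ : ℝ≥0∞) (‖u y‖₊ : ℝ≥0∞) with hab | hab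
            · calc (‖K x y‖₊ : ℝ≥0∞) * ‖u y‖₊ ≤ (‖u y‖₊ : ℝ≥0∞) * ‖u y‖₊ :=
                    mul_le_mul_left hab _
                _ = (‖u y‖₊ : ℝ≥0∞) ^ 2 := (sq _).symm
                _ ≤ _ := le_add_self
            · calc (‖K x y‖₊ : ℝ≥0∞) * ‖u y‖₊ ≤ (‖K x y‖₊ : ℝ≥0∞) * ‖K x y‖₊ :=
                    mul_le_mul_right hab _
                _ = (‖K x y‖₊ : ℝ≥0∞) ^ 2 := (sq _).symm
                _ ≤ _ := le_self_add
        _ = (∫⁻ y, (‖K x y‖₊ : ℝ≥0∞) ^ 2 ∂μ) + ∫⁻ y, (‖u y‖₊ : ℝ≥0∞) ^ 2 ∂μ :=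
            lintegral_add_left' (hxK.enorm.pow_const 2) _
        _ < ∞ := ENNReal.add_lt_top.2 ⟨hx, hu2⟩
    exact hfin
  -- curried positivity/injectivity
  have hpos' : ∀ᵐ x ∂μ, ∀ᵐ y ∂μ, ∀ v ∈ Y, K x y v ∈ Y :=
    MeasureTheory.Measure.ae_ae_of_ae_prod hKpos
  have hinj' : ∀ᵐ x ∂μ, ∀ᵐ y ∂μ, ∀ v ∈ Y, K x y v = 0 → v = 0 :=
    MeasureTheory.Measure.ae_ae_of_ae_prod hKinj
  -- key pointwise a.e.-x facts
  have hmain : ∀ᵐ x ∂μ,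
      Integrable (fun y => K x y (u y)) μ ∧
      (∀ᵐ y ∂μ, K x y (u y) ∈ Y) ∧
      (∀ᵐ y ∂μ, K x y (u y) = 0 → u y = 0) := by
    filter_upwards [hint, hpos', hinj'] with x hx hp hi
    refine ⟨hx, ?_, ?_⟩
    · filter_upwards [hp, hupos] with y hy hyu using hy _ hyu
    · filter_upwards [hi, hupos] with y hy hyu h0 using hy _ hyu h0
  have hmem : ∀ᵐ x ∂μ, (∫ y, K x y (u y) ∂μ) ∈ Y := by
    filter_upwards [hmain] with x hx
    obtain ⟨hxint, hp, -⟩ := hx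
    rw [hY]
    intro i
    have hcoord : (∫ y, K x y (u y) ∂μ) i = ∫ y, (K x y (u y)) i ∂μ := by
      have h := (EuclideanSpace.proj (𝕜 := ℝ) i).integral_comp_comm hxint
      simpa using h.symm
    rw [hcoord, ← integral_const_mul]
    refine integral_nonneg_of_ae ?_
    filter_upwards [hp] with y hy
    rw [hY] at hy
    exact hy i
  refine ⟨hmem, ?_⟩
  intro hzero
  haveI : (MeasureTheory.ae μ).NeBot := ae_neBot.2 (by
    intro h
    rw [h] at hμ
    simp at hμ)
  obtain ⟨x, hx, hxz⟩ := (hmain.and hzero).exists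
  obtain ⟨hxint, hxpos, hxinj⟩ := hx
  have hxz' : (∫ y, K x y (u y) ∂μ) = 0 := hxz
  -- each coordinate vanishes a.e.
  have hzero_ae : ∀ᵐ y ∂μ, K x y (u y) = 0 := by
    have hcoords : ∀ i : Fin d, ∀ᵐ y ∂μ, ς i * (K x y (u y)) i = 0 := by
      intro i
      have hnn : 0 ≤ᵐ[μ] fun y => ς i * (K x y (u y)) i := by
        filter_upwards [hxpos] with y hy
        rw [hY] at hy
        exact hy i
      have hintc : Integrable (fun y => ς i * (K x y (u y)) i) μ :=
        ((EuclideanSpace.proj (𝕜 := ℝ) i).integrable_comp hxint).const_mul _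
      have hintz : ∫ y, ς i * (K x y (u y)) i ∂μ = 0 := by
        rw [integral_const_mul]
        have hcoord : ∫ y, (K x y (u y)) i ∂μ = (∫ y, K x y (u y) ∂μ) i := by
          have h := (EuclideanSpace.proj (𝕜 := ℝ) i).integral_comp_comm hxint
          simpa using h
        rw [hcoord, hxz']
        simp
      exact (integral_eq_zero_iff_of_nonneg_ae hnn hintc).mp hintz
    filter_upwards [ae_all_iff.2 hcoords] with y hy
    ext i
    have hi := hy i
    rcases hς i with h1 | h1 <;> rw [h1] at hi <;> simp <;> linarith
  -- injectivity forces u = 0 a.e., contradiction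
  apply hune
  filter_upwards [hzero_ae, hxinj] with y h0 hinjy
  exact hinjy h0
end

section
/- Let Hypothesis (NL) hold, let $\Omega = \overline{\Omega^{\circ}}$, let the family of quadrature rules $(Q_n)_{n\in\mathbb{N}}$ have eventually positive weights (there is $n_1$ such that all weights of $Q_n$ are positive for $n \ge n_1$) and satisfy the net condition. Suppose $K(x,\eta)$ is $Y_+$-positive for all $x \in \Omega$, $\eta \in \Omega_n$, $n \in \mathbb{N}$, and there exists $\bar x \in \Omega$ such that $K(\bar x, \eta)$ is $Y_+$-injective for all $\eta \in \Omega_n$, $n \in \mathbb{N}$. Then for every $u \in C(\Omega)^d_+ \setminus \{0\}$ there exists $N \in \mathbb{N}$ such that $\mathscr{K}^n u \in C(\Omega)^d_+ \setminus \{0\}$ for all $n \ge N$, where $\mathscr{K}^n u := \sum_{j=0}^{q_n} w_j K(\cdot,\eta_j)u(\eta_j)$. -/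
open MeasureTheory

/-- Under Hypothesis (NL), with `Ω = closure Ω°`, quadrature rules with eventually
positive weights satisfying the net condition, a `Y₊`-positive kernel and some `x̄` at
which the kernel is `Y₊`-injective at all nodes: for every `u ∈ C(Ω)^d₊ \ {0}` there is
`N` such that `𝒦ⁿ u ∈ C(Ω)^d₊ \ {0}` for all `n ≥ N`. -/
theorem stmt12 {d κ : ℕ} (Ω : Set (EuclideanSpace ℝ (Fin κ))) (hΩ : IsCompact Ω)
    (hΩreg : Ω = closure (interior Ω))
    (Y : Set (EuclideanSpace ℝ (Fin d))) (hY : IsOrderCone Y)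
    (K : Ω → Ω → EuclideanSpace ℝ (Fin d) →L[ℝ] EuclideanSpace ℝ (Fin d))
    (hKcont : ∀ y, Continuous fun x => K x y)
    (q : ℕ → ℕ) (η : ∀ n : ℕ, Fin (q n + 1) → Ω) (w : ∀ n : ℕ, Fin (q n + 1) → ℝ)
    (hwpos : ∃ n₁ : ℕ, ∀ n ≥ n₁, ∀ j, 0 < w n j)
    (hnet : ∀ ε > (0 : ℝ), ∃ n₀ : ℕ, ∀ n ≥ n₀, ∀ x : Ω, ∃ j, dist x (η n j) < ε)
    (hKpos : ∀ (x : Ω) (n : ℕ) (j : Fin (q n + 1)), ∀ v ∈ Y, K x (η n j) v ∈ Y)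
    (hKinj : ∃ xb : Ω, ∀ (n : ℕ) (j : Fin (q n + 1)),
      ∀ v ∈ Y, K xb (η n j) v = 0 → v = 0)
    (u : C(Ω, EuclideanSpace ℝ (Fin d))) (hu : ∀ x, u x ∈ Y) (hune : u ≠ 0) :
    ∃ N : ℕ, ∀ n ≥ N,
      (∀ x : Ω, (∑ j, w n j • K x (η n j) (u (η n j))) ∈ Y) ∧
      (fun x : Ω => ∑ j, w n j • K x (η n j) (u (η n j))) ≠ 0 := by

  obtain ⟨hYne, hYcl, hYconv, hYscale, hYcone⟩ := hY
  obtain ⟨y0, hy0⟩ := hYne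
  have h0Y : (0 : EuclideanSpace ℝ (Fin d)) ∈ Y := by
    simpa using hYscale 0 le_rfl y0 hy0
  have haddY : ∀ a b : EuclideanSpace ℝ (Fin d), a ∈ Y → b ∈ Y → a + b ∈ Y := by
    intro a b ha hb
    have h := hYconv ha hb (by norm_num : (0:ℝ) ≤ 1/2) (by norm_num : (0:ℝ) ≤ 1/2)
      (by norm_num)
    have h2 := hYscale 2 (by norm_num) _ h
    have : (2:ℝ) • ((1/2 : ℝ) • a + (1/2 : ℝ) • b) = a + b := by
      rw [smul_add, smul_smul, smul_smul]; norm_num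
    rwa [this] at h2
  obtain ⟨n₁, hn₁⟩ := hwpos
  obtain ⟨xb, hxb⟩ := hKinj
  have hx0 : ∃ x₀ : Ω, u x₀ ≠ 0 := by
    by_contra h
    push_neg at h
    exact hune (ContinuousMap.ext fun x => by simpa using h x)
  obtain ⟨x₀, hx₀⟩ := hx0
  obtain ⟨ε, hε, hball⟩ := Metric.continuousAt_iff.mp (u.continuous.continuousAt (x := x₀))
    ‖u x₀‖ (norm_pos_iff.mpr hx₀)
  have hεu : ∀ x : Ω, dist x x₀ < ε → u x ≠ 0 := by
    intro x hx h0
    have h1 := hball hx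
    rw [h0, dist_comm, dist_zero_right] at h1
    exact lt_irrefl _ h1
  obtain ⟨n₀, hn₀⟩ := hnet ε hε
  refine ⟨max n₀ n₁, fun n hn => ?_⟩
  have hw : ∀ j, 0 < w n j := hn₁ n (le_trans (le_max_right _ _) hn)
  have hmem : ∀ (x : Ω) (s : Finset (Fin (q n + 1))),
      (∑ j ∈ s, w n j • K x (η n j) (u (η n j))) ∈ Y := by
    intro x s
    refine Finset.sum_induction _ (· ∈ Y) haddY h0Y ?_
    intro j _
    exact hYscale _ (hw j).le _ (hKpos x n j _ (hu _))
  refine ⟨fun x => hmem x Finset.univ, ?_⟩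
  intro hzero
  obtain ⟨j₀, hj₀⟩ := hn₀ n (le_trans (le_max_left _ _) hn) x₀
  have huj : u (η n j₀) ≠ 0 := hεu _ (by rw [dist_comm]; exact hj₀)
  have hterm : K xb (η n j₀) (u (η n j₀)) ≠ 0 := fun h => huj (hxb n j₀ _ (hu _) h)
  have htw : w n j₀ • K xb (η n j₀) (u (η n j₀)) ≠ 0 :=
    smul_ne_zero (ne_of_gt (hw j₀)) hterm
  have hx : (∑ j, w n j • K xb (η n j) (u (η n j))) = 0 := congrFun hzero xb
  rw [← Finset.add_sum_erase _ _ (Finset.mem_univ j₀)] at hx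
  set t := w n j₀ • K xb (η n j₀) (u (η n j₀)) with ht
  set r := ∑ j ∈ Finset.univ.erase j₀, w n j • K xb (η n j) (u (η n j)) with hr
  have htY : t ∈ Y := hYscale _ (hw j₀).le _ (hKpos xb n j₀ _ (hu _))
  have hrY : r ∈ Y := hmem xb _
  have hteq : t = -r := eq_neg_of_add_eq_zero_left hx
  have : t ∈ Y ∩ (-Y) := ⟨htY, by rw [hteq]; exact Set.neg_mem_neg.mpr hrY⟩
  rw [hYcone] at this
  exact htw this
end

section
/- Consider the collocation projection $\Pi_n$ on $C(\Omega)^d$, given componentwise by $(\Pi_n u)(x) = \sum_{i=1}^{d_n} \sigma_i(x)\,u(x_i)$ where $\sigma_i(x) := \sum_{j=1}^{d_n} (P_n^{-1})_{ij}\,\phi_j(x)$. Suppose every $\sigma_i$ has nonnegative values, $Y_+$ is solid, and for every $x \in \Omega$ there exists an index $i_0 \in \{1,\dots,d_n\}$ with $\sigma_{i_0}(x) > 0$. Then $\Pi_n$ maps the interior of $C(\Omega)^d_+$ into the interior of $C(\Omega)^d_+$. -/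
open MeasureTheory

/-- If all functions `σᵢ` of a collocation method are nonnegative, `Y₊` is solid, and
for every `x` some `σᵢ₀(x) > 0`, then the collocation projection
`(Πₙ u)(x) = ∑ᵢ σᵢ(x) u(xᵢ)` maps the interior of `C(Ω)^d₊` into the interior of
`C(Ω)^d₊`. -/
theorem stmt15 {d m : ℕ} {Ω : Type*} [MetricSpace Ω] [CompactSpace Ω]
    (Y : Set (EuclideanSpace ℝ (Fin d))) (hY : IsOrderCone Y)
    (hsolid : (interior Y).Nonempty)
    (φ : Fin m → C(Ω, ℝ)) (hφ : LinearIndependent ℝ φ)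
    (xs : Fin m → Ω) (hxs : Function.Injective xs)
    (P : Matrix (Fin m) (Fin m) ℝ) (hP : P = Matrix.of fun i j => φ i (xs j))
    (hPunit : IsUnit P.det)
    (σ : Fin m → Ω → ℝ) (hσ : ∀ i x, σ i x = ∑ j, P⁻¹ i j * φ j x)
    (hσpos : ∀ i x, 0 ≤ σ i x)
    (hσstar : ∀ x : Ω, ∃ i, 0 < σ i x)
    (u : C(Ω, EuclideanSpace ℝ (Fin d)))
    (hu : u ∈ interior {f : C(Ω, EuclideanSpace ℝ (Fin d)) | ∀ x, f x ∈ Y}) :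
    ∃ v : C(Ω, EuclideanSpace ℝ (Fin d)),
      (∀ x : Ω, v x = ∑ i, σ i x • u (xs i)) ∧
      v ∈ interior {f : C(Ω, EuclideanSpace ℝ (Fin d)) | ∀ x, f x ∈ Y} := by
  obtain ⟨hne, hclosed, hconv, hsmulY, -⟩ := hY
  -- basic cone facts
  have hzeroY : (0 : EuclideanSpace ℝ (Fin d)) ∈ Y := by
    obtain ⟨y, hy⟩ := hne
    simpa using hsmulY 0 le_rfl y hy
  have haddY : ∀ a ∈ Y, ∀ b ∈ Y, a + b ∈ Y := by
    intro a ha b hb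
    have h := hconv ha hb (by norm_num : (0:ℝ) ≤ 1/2) (by norm_num : (0:ℝ) ≤ 1/2)
      (by norm_num)
    have h2 := hsmulY 2 (by norm_num) _ h
    simpa [smul_smul, smul_add] using h2
  have hsumY : ∀ (f : Fin m → EuclideanSpace ℝ (Fin d)),
      (∀ i, f i ∈ Y) → ∑ i, f i ∈ Y := by
    intro f hf
    refine Finset.sum_induction f (· ∈ Y) (fun a b ha hb => haddY a ha b hb) hzeroY
      (fun i _ => hf i)
  -- continuity of σ
  have hσcont : ∀ i, Continuous (σ i) := by
    intro i
    have : σ i = fun x => ∑ j, P⁻¹ i j * φ j x := by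
      funext x; exact hσ i x
    rw [this]
    exact continuous_finset_sum _ fun j _ =>
      (continuous_const.mul (φ j).continuous)
  -- the projection v
  refine ⟨⟨fun x => ∑ i, σ i x • u (xs i), by
    exact continuous_finset_sum _ fun i _ => (hσcont i).smul continuous_const⟩,
    fun x => rfl, ?_⟩
  set v : C(Ω, EuclideanSpace ℝ (Fin d)) :=
    ⟨fun x => ∑ i, σ i x • u (xs i), by
      exact continuous_finset_sum _ fun i _ => (hσcont i).smul continuous_const⟩ with hv
  -- interior ball around u
  obtain ⟨ε, hε, hball⟩ := (mem_interior_iff_mem_nhds.mp hu |> Metric.mem_nhds_iff.mp)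
  -- perturbation lemma
  have key : ∀ w : EuclideanSpace ℝ (Fin d), ‖w‖ < ε → ∀ x, u x + w ∈ Y := by
    intro w hw x
    have hmem : u + ContinuousMap.const Ω w ∈ Metric.ball u ε := by
      rw [Metric.mem_ball, dist_eq_norm]
      have : ‖u + ContinuousMap.const Ω w - u‖ ≤ ‖w‖ := by
        refine ContinuousMap.norm_le _ (norm_nonneg w) |>.mpr fun y => ?_
        simp
      exact lt_of_le_of_lt this hw
    simpa using hball hmem x
  -- positive lower bound for s x = ∑ σ i x
  have hscont : Continuous fun x => ∑ i, σ i x :=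
    continuous_finset_sum _ fun i _ => hσcont i
  have hspos : ∀ x, 0 < ∑ i, σ i x := by
    intro x
    obtain ⟨i, hi⟩ := hσstar x
    exact Finset.sum_pos' (fun j _ => hσpos j x) ⟨i, Finset.mem_univ i, hi⟩
  obtain ⟨c, hc, hcs⟩ : ∃ c : ℝ, 0 < c ∧ ∀ x, c ≤ ∑ i, σ i x := by
    rcases isEmpty_or_nonempty Ω with h | h
    · exact ⟨1, one_pos, fun x => isEmptyElim x⟩
    · obtain ⟨x₀, -, hx₀⟩ := isCompact_univ.exists_isMinOn Set.univ_nonempty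
        hscont.continuousOn
      exact ⟨∑ i, σ i x₀, hspos x₀, fun x => hx₀ (Set.mem_univ x)⟩
  -- show v in interior
  refine mem_interior_iff_mem_nhds.mpr <| Metric.mem_nhds_iff.mpr ⟨c * ε, mul_pos hc hε, fun g hg => ?_⟩
  intro x
  set sx := ∑ i, σ i x with hsx
  have hsxpos : 0 < sx := hspos x
  set w : EuclideanSpace ℝ (Fin d) := sx⁻¹ • (g x - v x) with hwdef
  have hdist : ‖g x - v x‖ < c * ε := by
    have h1 : ‖g x - v x‖ = dist (g x) (v x) := (dist_eq_norm _ _).symm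
    rw [h1]
    exact lt_of_le_of_lt (ContinuousMap.dist_apply_le_dist x) hg
  have hwnorm : ‖w‖ < ε := by
    rw [hwdef, norm_smul, norm_inv, Real.norm_of_nonneg hsxpos.le]
    rw [inv_mul_lt_iff₀ hsxpos]
    calc ‖g x - v x‖ < c * ε := hdist
      _ ≤ sx * ε := by
          exact mul_le_mul_of_nonneg_right (hcs x) hε.le
  have hgx : g x = ∑ i, σ i x • (u (xs i) + w) := by
    have hsw : sx • w = g x - v x := by
      rw [hwdef, smul_smul, mul_inv_cancel₀ hsxpos.ne', one_smul]
    have : ∑ i, σ i x • (u (xs i) + w)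
        = (∑ i, σ i x • u (xs i)) + sx • w := by
      rw [hsx, Finset.sum_smul]
      rw [← Finset.sum_add_distrib]
      exact Finset.sum_congr rfl fun i _ => smul_add _ _ _
    rw [this, hsw]
    have hvx : v x = ∑ i, σ i x • u (xs i) := rfl
    rw [← hvx]
    abel
  rw [hgx]
  exact hsumY _ fun i => hsmulY _ (hσpos i x) _ (key w hwnorm (xs i))
end

section
/- Let $a = x_0 < x_1 < \dots < x_n = b$ be a grid with $h_i := x_{i+1}-x_i$, and define $\Pi_n : C[a,b]^d \to C[a,b]^d$ piecewise by $(\Pi_n u)(x) := \big(1 - 3(\tfrac{x-x_i}{h_i})^2 + 2(\tfrac{x-x_i}{h_i})^3\big)u(x_i) + \big(3(\tfrac{x-x_i}{h_i})^2 - 2(\tfrac{x-x_i}{h_i})^3\big)u(x_{i+1})$ for $x \in [x_i,x_{i+1}]$, $0 \le i < n$. Then $\Pi_n$ is a well-defined bounded linear map whose values are continuously differentiable (cubic $C^1$-splines), $\Pi_n$ is $C[a,b]^d_+$-positive (it maps $C[a,b]^d_+$ into $C[a,b]^d_+$), and its operator norm satisfies $\|\Pi_n\|_{L(C[a,b]^d)}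 \le 2$. -/
open MeasureTheory

noncomputable section SplineAux

/-- The cubic blending polynomial `q(θ) = 3θ² - 2θ³`. -/
def qfun (θ : ℝ) : ℝ := 3 * θ ^ 2 - 2 * θ ^ 3

/-- Clamp to `[0,1]`. -/
def clamp01 (θ : ℝ) : ℝ := min 1 (max 0 θ)

/-- The clamped blending function. -/
def qt (θ : ℝ) : ℝ := qfun (clamp01 θ)

/-- The derivative of `qt`. -/
def pfun (θ : ℝ) : ℝ := 6 * clamp01 θ - 6 * (clamp01 θ) ^ 2

lemma clamp01_of_nonpos {θ : ℝ} (h : θ ≤ 0) : clamp01 θ = 0 := by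
  simp [clamp01, max_eq_left h]

lemma clamp01_of_one_le {θ : ℝ} (h : 1 ≤ θ) : clamp01 θ = 1 := by
  simp [clamp01, min_eq_left (le_max_of_le_right h)]

lemma clamp01_of_mem {θ : ℝ} (h0 : 0 ≤ θ) (h1 : θ ≤ 1) : clamp01 θ = θ := by
  simp [clamp01, max_eq_right h0, min_eq_right h1]

lemma clamp01_mem (θ : ℝ) : clamp01 θ ∈ Set.Icc (0:ℝ) 1 :=
  ⟨le_min zero_le_one (le_max_left _ _), min_le_left _ _⟩

lemma qt_of_nonpos {θ : ℝ} (h : θ ≤ 0) : qt θ = 0 := by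
  simp [qt, clamp01_of_nonpos h, qfun]

lemma qt_of_one_le {θ : ℝ} (h : 1 ≤ θ) : qt θ = 1 := by
  simp [qt, clamp01_of_one_le h, qfun]; norm_num

lemma qt_of_mem {θ : ℝ} (h0 : 0 ≤ θ) (h1 : θ ≤ 1) : qt θ = qfun θ := by
  simp [qt, clamp01_of_mem h0 h1]

lemma qfun_nonneg {θ : ℝ} (h0 : 0 ≤ θ) (h1 : θ ≤ 1) : 0 ≤ qfun θ := by
  unfold qfun; nlinarith [sq_nonneg θ]

lemma qfun_le_one {θ : ℝ} (h0 : 0 ≤ θ) (h1 : θ ≤ 1) : qfun θ ≤ 1 := by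
  unfold qfun; nlinarith [sq_nonneg (1 - θ)]

lemma continuous_clamp01 : Continuous clamp01 :=
  continuous_const.min (continuous_const.max continuous_id)

lemma continuous_pfun : Continuous pfun := by
  unfold pfun
  exact ((continuous_const.mul continuous_clamp01).sub
    (continuous_const.mul (continuous_clamp01.pow 2)))

lemma hasDerivAt_qfun (θ : ℝ) : HasDerivAt qfun (6 * θ - 6 * θ ^ 2) θ := by
  have h : HasDerivAt (fun s : ℝ => 3 * s ^ 2 - 2 * s ^ 3)
      (3 * ((2:ℕ) * θ ^ 1) - 2 * ((3:ℕ) * θ ^ 2)) θ :=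
    ((hasDerivAt_pow 2 θ).const_mul 3).sub ((hasDerivAt_pow 3 θ).const_mul 2)
  convert h using 1
  · rfl
  · push_cast; ring

lemma hasDerivAt_qt (θ : ℝ) : HasDerivAt qt (pfun θ) θ := by
  have hIcc : HasDerivWithinAt qt (pfun 0) (Set.Icc (0:ℝ) 1) 0 := by
    have h := (hasDerivAt_qfun 0).hasDerivWithinAt (s := Set.Icc (0:ℝ) 1)
    refine (h.congr (fun y hy => qt_of_mem hy.1 hy.2) (qt_of_mem le_rfl zero_le_one)).congr_deriv ?_
    simp [pfun, clamp01_of_nonpos le_rfl]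
  have hIcc1 : HasDerivWithinAt qt (pfun 1) (Set.Icc (0:ℝ) 1) 1 := by
    have h := (hasDerivAt_qfun 1).hasDerivWithinAt (s := Set.Icc (0:ℝ) 1)
    refine (h.congr (fun y hy => qt_of_mem hy.1 hy.2) (qt_of_mem zero_le_one le_rfl)).congr_deriv ?_
    simp [pfun, clamp01_of_one_le le_rfl]
  rcases lt_trichotomy θ 0 with h | h | h
  · have heq : qt =ᶠ[nhds θ] fun _ => 0 := by
      filter_upwards [Iio_mem_nhds h] with s hs
      exact qt_of_nonpos hs.le
    have h0 : pfun θ = 0 := by simp [pfun, clamp01_of_nonpos h.le]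
    rw [h0]
    exact (hasDerivAt_const θ (0:ℝ)).congr_of_eventuallyEq heq
  · subst h
    have hIic : HasDerivWithinAt qt (pfun 0) (Set.Iic (0:ℝ)) 0 := by
      have h0 : pfun 0 = 0 := by simp [pfun, clamp01_of_nonpos le_rfl]
      rw [h0]
      exact ((hasDerivAt_const (0:ℝ) (0:ℝ)).hasDerivWithinAt).congr
        (fun y hy => qt_of_nonpos hy) (qt_of_nonpos le_rfl)
    have hu := hIic.union hIcc
    rw [Set.Iic_union_Icc_eq_Iic zero_le_one] at hu
    exact hu.hasDerivAt (Iic_mem_nhds one_pos)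
  · rcases lt_trichotomy θ 1 with h1 | h1 | h1
    · have heq : qt =ᶠ[nhds θ] qfun := by
        filter_upwards [Ioo_mem_nhds h h1] with s hs
        exact qt_of_mem hs.1.le hs.2.le
      have h0 : pfun θ = 6 * θ - 6 * θ ^ 2 := by
        simp [pfun, clamp01_of_mem h.le h1.le]
      rw [h0]
      exact (hasDerivAt_qfun θ).congr_of_eventuallyEq heq
    · subst h1
      have hIci : HasDerivWithinAt qt (pfun 1) (Set.Ici (1:ℝ)) 1 := by
        have h0 : pfun 1 = 0 := by simp [pfun, clamp01_of_one_le le_rfl]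
        rw [h0]
        exact ((hasDerivAt_const (1:ℝ) (1:ℝ)).hasDerivWithinAt).congr
          (fun y hy => qt_of_one_le hy) (qt_of_one_le le_rfl)
      have hu := hIcc1.union hIci
      rw [Set.Icc_union_Ici_eq_Ici zero_le_one] at hu
      exact hu.hasDerivAt (Ici_mem_nhds one_pos)
    · have heq : qt =ᶠ[nhds θ] fun _ => 1 := by
        filter_upwards [Ioi_mem_nhds h1] with s hs
        exact qt_of_one_le hs.le
      have h0 : pfun θ = 0 := by simp [pfun, clamp01_of_one_le h1.le]
      rw [h0]
      exact (hasDerivAt_const θ (1:ℝ)).congr_of_eventuallyEq heq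

lemma contDiff_qt : ContDiff ℝ 1 qt := by
  rw [contDiff_one_iff_deriv]
  refine ⟨fun θ => (hasDerivAt_qt θ).differentiableAt, ?_⟩
  have : deriv qt = pfun := funext fun θ => (hasDerivAt_qt θ).deriv
  rw [this]; exact continuous_pfun

lemma continuous_qt : Continuous qt := contDiff_qt.continuous

/-- The spline interpolant in telescoping form. -/
def gfun (d n : ℕ) (X : ℕ → ℝ) (U : ℕ → Fin d → ℝ) (t : ℝ) : Fin d → ℝ :=
  U 0 + ∑ i ∈ Finset.range n, qt ((t - X i) / (X (i + 1) - X i)) • (U (i + 1) - U i)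

lemma contDiff_gfun (d n : ℕ) (X : ℕ → ℝ) (U : ℕ → Fin d → ℝ) :
    ContDiff ℝ 1 (gfun d n X U) := by
  unfold gfun
  refine contDiff_const.add (ContDiff.sum fun i _ => ContDiff.smul (f := fun x => qt ((x - X i) / (X (i + 1) - X i))) (g := fun _ => U (i + 1) - U i) ?_ contDiff_const)
  exact contDiff_qt.comp ((contDiff_id.sub contDiff_const).div_const _)

lemma gfun_collapse {d n : ℕ} {X : ℕ → ℝ} {U : ℕ → Fin d → ℝ}
    (hX : ∀ i j : ℕ, i < j → j ≤ n → X i < X j)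
    {k : ℕ} (hk : k < n) {t : ℝ} (h1 : X k ≤ t) (h2 : t ≤ X (k + 1)) :
    gfun d n X U t =
      (1 - qfun ((t - X k) / (X (k + 1) - X k))) • U k
        + qfun ((t - X k) / (X (k + 1) - X k)) • U (k + 1) := by
  have hXle : ∀ i j : ℕ, i ≤ j → j ≤ n → X i ≤ X j := by
    intro i j hij hj
    rcases eq_or_lt_of_le hij with rfl | h
    · exact le_rfl
    · exact (hX i j h hj).le
  have hsplit : ∑ i ∈ Finset.range n, qt ((t - X i) / (X (i + 1) - X i)) • (U (i + 1) - U i)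
      = (∑ i ∈ Finset.range (k + 1), qt ((t - X i) / (X (i + 1) - X i)) • (U (i + 1) - U i))
        + ∑ i ∈ Finset.Ico (k + 1) n, qt ((t - X i) / (X (i + 1) - X i)) • (U (i + 1) - U i) := by
    rw [Finset.range_eq_Ico,
      ← Finset.sum_Ico_consecutive _ (Nat.zero_le (k + 1)) (by omega : k + 1 ≤ n), ← Finset.range_eq_Ico]
  have hzero : ∑ i ∈ Finset.Ico (k + 1) n, qt ((t - X i) / (X (i + 1) - X i)) • (U (i + 1) - U i)
      = 0 := by
    refine Finset.sum_eq_zero fun i hi => ?_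
    rw [Finset.mem_Ico] at hi
    have hden : (0:ℝ) < X (i + 1) - X i := sub_pos.mpr (hX i (i + 1) (by omega) (by omega))
    have hnum : t - X i ≤ 0 := by
      have : X (k + 1) ≤ X i := hXle (k + 1) i hi.1 (by omega)
      linarith
    have : qt ((t - X i) / (X (i + 1) - X i)) = 0 :=
      qt_of_nonpos (div_nonpos_of_nonpos_of_nonneg hnum hden.le)
    rw [this, zero_smul]
  have hones : ∀ i ∈ Finset.range k, qt ((t - X i) / (X (i + 1) - X i)) • (U (i + 1) - U i)
      = U (i + 1) - U i := by
    intro i hi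
    rw [Finset.mem_range] at hi
    have hden : (0:ℝ) < X (i + 1) - X i := sub_pos.mpr (hX i (i + 1) (by omega) (by omega))
    have hnum : X (i + 1) - X i ≤ t - X i := by
      have : X (i + 1) ≤ X k := hXle (i + 1) k (by omega) (by omega)
      linarith
    have : qt ((t - X i) / (X (i + 1) - X i)) = 1 :=
      qt_of_one_le ((one_le_div hden).mpr hnum)
    rw [this, one_smul]
  have hden : (0:ℝ) < X (k + 1) - X k := sub_pos.mpr (hX k (k + 1) (by omega) (by omega))
  have hqk : qt ((t - X k) / (X (k + 1) - X k)) = qfun ((t - X k) / (X (k + 1) - X k)) :=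
    qt_of_mem (div_nonneg (by linarith) hden.le) ((div_le_one hden).mpr (by linarith))
  rw [gfun, hsplit, hzero, add_zero, Finset.sum_range_succ, Finset.sum_congr rfl hones,
    Finset.sum_range_sub, hqk]
  rw [sub_smul, one_smul, smul_sub]
  abel

lemma gfun_add {d n : ℕ} {X : ℕ → ℝ} {U V W : ℕ → Fin d → ℝ}
    (h : ∀ j, W j = U j + V j) (t : ℝ) :
    gfun d n X W t = gfun d n X U t + gfun d n X V t := by
  unfold gfun
  have hterm : ∀ i ∈ Finset.range n,
      qt ((t - X i) / (X (i + 1) - X i)) • (W (i + 1) - W i)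
        = qt ((t - X i) / (X (i + 1) - X i)) • (U (i + 1) - U i)
          + qt ((t - X i) / (X (i + 1) - X i)) • (V (i + 1) - V i) := by
    intro i _
    rw [h, h, smul_sub, smul_sub, smul_sub, smul_add, smul_add]
    abel
  rw [Finset.sum_congr rfl hterm, Finset.sum_add_distrib, h 0]
  abel

lemma gfun_smul {d n : ℕ} {X : ℕ → ℝ} {U W : ℕ → Fin d → ℝ} {c : ℝ}
    (h : ∀ j, W j = c • U j) (t : ℝ) :
    gfun d n X W t = c • gfun d n X U t := by
  unfold gfun
  have hterm : ∀ i ∈ Finset.range n,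
      qt ((t - X i) / (X (i + 1) - X i)) • (W (i + 1) - W i)
        = c • (qt ((t - X i) / (X (i + 1) - X i)) • (U (i + 1) - U i)) := by
    intro i _
    rw [h, h, ← smul_sub, smul_comm]
  rw [Finset.sum_congr rfl hterm, ← Finset.smul_sum, h 0, smul_add]

end SplineAux


/-- The piecewise cubic interpolation
`(Πₙ u)(t) = (1 - 3θ² + 2θ³) u(xᵢ) + (3θ² - 2θ³) u(xᵢ₊₁)`, `θ = (t - xᵢ)/hᵢ`,
on a grid `a = x₀ < … < xₙ = b` defines a bounded linear operator on `C[a,b]^d`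
(with `ℝ^d` carrying the maximum norm) whose values are `C¹` cubic splines,
which is `C[a,b]^d₊`-positive and has operator norm at most `2`. -/
theorem stmt16 {d n : ℕ} (hn : 0 < n) (a b : ℝ) (hab : a < b)
    (Y : Set (Fin d → ℝ)) (hY : IsOrderCone Y)
    (x : Fin (n + 1) → ℝ) (hmono : StrictMono x)
    (hxa : x 0 = a) (hxb : x (Fin.last n) = b)
    (hxmem : ∀ i, x i ∈ Set.Icc a b)
    (hmem : ∀ (i : Fin n) (t : ℝ),
      t ∈ Set.Icc (x i.castSucc) (x i.succ) → t ∈ Set.Icc a b) :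
    ∃ T : C(Set.Icc a b, Fin d → ℝ) →L[ℝ] C(Set.Icc a b, Fin d → ℝ),
      (∀ (u : C(Set.Icc a b, Fin d → ℝ)) (i : Fin n) (t : ℝ)
          (ht : t ∈ Set.Icc (x i.castSucc) (x i.succ)),
        T u ⟨t, hmem i t ht⟩ =
          (1 - 3 * ((t - x i.castSucc) / (x i.succ - x i.castSucc)) ^ 2
             + 2 * ((t - x i.castSucc) / (x i.succ - x i.castSucc)) ^ 3) •
            u ⟨x i.castSucc, hxmem i.castSucc⟩
          + (3 * ((t - x i.castSucc) / (x i.succ - x i.castSucc)) ^ 2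
             - 2 * ((t - x i.castSucc) / (x i.succ - x i.castSucc)) ^ 3) •
            u ⟨x i.succ, hxmem i.succ⟩) ∧
      (∀ u : C(Set.Icc a b, Fin d → ℝ), ∃ g : ℝ → (Fin d → ℝ),
        ContDiffOn ℝ 1 g (Set.Icc a b) ∧ ∀ z : Set.Icc a b, T u z = g z) ∧
      (∀ u : C(Set.Icc a b, Fin d → ℝ), (∀ z, u z ∈ Y) → ∀ z, T u z ∈ Y) ∧
      ‖T‖ ≤ 2 := by
  classical
  -- the grid as a function on ℕ
  set X : ℕ → ℝ := fun j => x ⟨min j n, by omega⟩ with hXdef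
  have hXmem : ∀ j, X j ∈ Set.Icc a b := fun j => hxmem _
  have hXlt : ∀ i j : ℕ, i < j → j ≤ n → X i < X j := by
    intro i j hij hj
    exact hmono (by simp only [Fin.lt_def]; omega)
  have hX0 : X 0 = a := by
    rw [← hxa]
    exact congrArg x (Fin.ext (by simp))
  have hXn : X n = b := by
    rw [← hxb]
    exact congrArg x (Fin.ext (by simp [Fin.last]))
  -- values at grid points
  set U : C(Set.Icc a b, Fin d → ℝ) → ℕ → Fin d → ℝ :=
    fun u j => u ⟨X j, hXmem j⟩ with hUdef
  -- the underlying linear map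
  set Tlin : C(Set.Icc a b, Fin d → ℝ) →ₗ[ℝ] C(Set.Icc a b, Fin d → ℝ) :=
    { toFun := fun u =>
        ⟨fun z => gfun d n X (U u) z.1,
          (contDiff_gfun d n X (U u)).continuous.comp continuous_subtype_val⟩
      map_add' := by
        intro u v
        refine ContinuousMap.ext fun z => ?_
        simp only [ContinuousMap.add_apply, ContinuousMap.coe_mk]
        exact gfun_add (U := U u) (V := U v) (fun j => rfl) z.1
      map_smul' := by
        intro c u
        refine ContinuousMap.ext fun z => ?_
        simp only [ContinuousMap.smul_apply, ContinuousMap.coe_mk, RingHom.id_apply]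
        exact gfun_smul (U := U u) (c := c) (fun j => rfl) z.1 } with hTdef
  -- locating a point of [a,b] in the grid
  have locate : ∀ t : ℝ, t ∈ Set.Icc a b → ∃ k, k < n ∧ X k ≤ t ∧ t ≤ X (k + 1) := by
    intro t ht
    have h0 : X 0 ≤ t := by rw [hX0]; exact ht.1
    set k := Nat.findGreatest (fun j => X j ≤ t) (n - 1) with hk
    have hk0 : X k ≤ t := Nat.findGreatest_spec (P := fun j => X j ≤ t) (Nat.zero_le _) h0
    have hkle : k ≤ n - 1 := Nat.findGreatest_le _
    refine ⟨k, by omega, hk0, ?_⟩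
    by_cases h : k = n - 1
    · have hb' : X (k + 1) = b := by
        rw [h, show n - 1 + 1 = n by omega, hXn]
      rw [hb']; exact ht.2
    · have hlt := Nat.findGreatest_is_greatest (P := fun j => X j ≤ t)
        (show k < k + 1 by omega) (show k + 1 ≤ n - 1 by omega)
      exact (not_le.mp hlt).le
  -- two-point convex-combination form of Tlin
  have hpt : ∀ (u : C(Set.Icc a b, Fin d → ℝ)) (z : Set.Icc a b), ∃ (k : ℕ) (w : ℝ),
      k < n ∧ 0 ≤ w ∧ w ≤ 1 ∧ Tlin u z = (1 - w) • U u k + w • U u (k + 1) := by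
    intro u z
    obtain ⟨k, hk, h1, h2⟩ := locate z.1 z.2
    have hden : (0:ℝ) < X (k + 1) - X k := sub_pos.mpr (hXlt k (k + 1) (by omega) (by omega))
    set θ : ℝ := (z.1 - X k) / (X (k + 1) - X k) with hθ
    have hθ0 : 0 ≤ θ := div_nonneg (by linarith) hden.le
    have hθ1 : θ ≤ 1 := (div_le_one hden).mpr (by linarith)
    refine ⟨k, qfun θ, hk, qfun_nonneg hθ0 hθ1, qfun_le_one hθ0 hθ1, ?_⟩
    exact gfun_collapse hXlt hk h1 h2
  -- norm bound
  have hbound : ∀ u : C(Set.Icc a b, Fin d → ℝ), ‖Tlin u‖ ≤ 2 * ‖u‖ := by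
    intro u
    refine ContinuousMap.norm_le _ (by positivity) |>.mpr fun z => ?_
    obtain ⟨k, w, hk, hw0, hw1, heq⟩ := hpt u z
    rw [heq]
    have h1 : ‖U u k‖ ≤ ‖u‖ := u.norm_coe_le_norm _
    have h2 : ‖U u (k + 1)‖ ≤ ‖u‖ := u.norm_coe_le_norm _
    calc ‖(1 - w) • U u k + w • U u (k + 1)‖
        ≤ ‖(1 - w) • U u k‖ + ‖w • U u (k + 1)‖ := norm_add_le _ _
      _ = (1 - w) * ‖U u k‖ + w * ‖U u (k + 1)‖ := by
          rw [norm_smul, norm_smul, Real.norm_of_nonneg (by linarith),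
            Real.norm_of_nonneg hw0]
      _ ≤ 2 * ‖u‖ := by nlinarith [norm_nonneg u]
  refine ⟨Tlin.mkContinuous 2 hbound, ?_, ?_, ?_, ?_⟩
  · -- pointwise interpolation formula
    intro u i t ht
    have hiv : (i : ℕ) < n := i.2
    have e1 : x i.castSucc = X i.1 := by
      rw [hXdef]
      congr 1
      ext
      simp only [Fin.coe_castSucc]
      omega
    have e2 : x i.succ = X (i.1 + 1) := by
      rw [hXdef]
      congr 1
      ext
      simp only [Fin.val_succ]
      omega
    have h1 : X i.1 ≤ t := e1 ▸ ht.1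
    have h2 : t ≤ X (i.1 + 1) := e2 ▸ ht.2
    have hs1 : (⟨x i.castSucc, hxmem i.castSucc⟩ : Set.Icc a b) = ⟨X i.1, hXmem i.1⟩ :=
      Subtype.ext e1
    have hs2 : (⟨x i.succ, hxmem i.succ⟩ : Set.Icc a b) = ⟨X (i.1 + 1), hXmem (i.1 + 1)⟩ :=
      Subtype.ext e2
    have key : Tlin.mkContinuous 2 hbound u ⟨t, hmem i t ht⟩
        = (1 - qfun ((t - X i.1) / (X (i.1 + 1) - X i.1))) • U u i.1
          + qfun ((t - X i.1) / (X (i.1 + 1) - X i.1)) • U u (i.1 + 1) :=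
      gfun_collapse hXlt hiv h1 h2
    rw [key, hs1, hs2, e1, e2]
    have hc : ∀ θ : ℝ, 1 - 3 * θ ^ 2 + 2 * θ ^ 3 = 1 - qfun θ := by
      intro θ; simp only [qfun]; ring
    rw [hc]
    rfl
  · -- C¹ splines
    intro u
    exact ⟨gfun d n X (U u), (contDiff_gfun d n X (U u)).contDiffOn, fun z => rfl⟩
  · -- positivity
    intro u hu z
    obtain ⟨k, w, hk, hw0, hw1, heq⟩ := hpt u z
    have : Tlin.mkContinuous 2 hbound u z = Tlin u z := rfl
    rw [this, heq]
    exact hY.2.2.1 (hu _) (hu _) (by linarith) hw0 (by ring)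
  · -- operator norm
    exact Tlin.mkContinuous_norm_le (by norm_num) hbound
end

section
/- Let $\phi_1,\dots,\phi_{d_n} \in L^2(\Omega)$ be linearly independent functions with nonnegative values, and suppose the Gramian matrix $P_n = ((\phi_j,\phi_i))_{i,j=1}^{d_n}$ is monomial (every row and every column contains exactly one nonzero entry, which is positive). Then the Bubnov–Galerkin projection $\Pi_n$ on $L^2(\Omega)^d$, given componentwise by $\pi_n u = \sum_{j=1}^{d_n}\phi_j \sum_{i=1}^{d_n}(P_n^{-1})_{ij}(u,\phi_i)$, is $L^2(\Omega)^d_+$-positive, i.e. $\Pi_n(L^2(\Omega)^d_+) \subseteq L^2(\Omega)^d_+$. -/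
open MeasureTheory

private theorem lp_coeFn_sum' {α E : Type*} [MeasurableSpace α] {μ : MeasureTheory.Measure α}
    [NormedAddCommGroup E] {p : ENNReal} {ι : Type*} (s : Finset ι) (f : ι → Lp E p μ) :
    (↑(∑ i ∈ s, f i) : α → E) =ᵐ[μ] fun x => ∑ i ∈ s, (f i : α → E) x := by
  classical
  induction s using Finset.cons_induction with
  | empty => simp only [Finset.sum_empty]; exact Lp.coeFn_zero (E := E) (p := p) (μ := μ)
  | cons a s ha ih =>
    filter_upwards [Lp.coeFn_add (f a) (∑ i ∈ s, f i), ih] with x h1 h2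
    rw [Finset.sum_cons, h1, Pi.add_apply, h2, Finset.sum_cons]

/-- If the (linearly independent) basis functions `φ₁, …, φₘ ∈ L²(Ω)` have nonnegative
values and the Gramian `Pᵢⱼ = (φⱼ, φᵢ)` is a monomial matrix, then the Bubnov–Galerkin
projection `πₙ u = ∑ⱼ (∑ᵢ (Pₙ⁻¹)ᵢⱼ (u, φᵢ)) φⱼ`, acting componentwise, is
`L²(Ω)^d₊`-positive. -/
theorem stmt17 {d m : ℕ} {Ω : Type*} [MeasurableSpace Ω]
    (μ : Measure Ω) [IsFiniteMeasure μ] (hμ : 0 < μ Set.univ)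
    (Y : Set (Fin d → ℝ)) (hY : IsOrderCone Y)
    (φ : Fin m → Lp ℝ 2 μ) (hφind : LinearIndependent ℝ φ)
    (hφpos : ∀ i, ∀ᵐ x ∂μ, 0 ≤ φ i x)
    (P : Matrix (Fin m) (Fin m) ℝ)
    (hP : P = Matrix.of fun i j => ∫ x, φ j x * φ i x ∂μ)
    (hProw : ∀ i, ∃! j, P i j ≠ 0)
    (hPcol : ∀ j, ∃! i, P i j ≠ 0)
    (hPpos : ∀ i j, P i j ≠ 0 → 0 < P i j)
    (u : Fin d → Lp ℝ 2 μ)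
    (hu : ∀ᵐ x ∂μ, (fun k => u k x) ∈ Y) :
    ∀ᵐ x ∂μ,
      (fun k => ((∑ j, (∑ i, P⁻¹ i j * ∫ y, u k y * φ i y ∂μ) • φ j :
        Lp ℝ 2 μ) : Ω → ℝ) x) ∈ Y := by
  classical
  obtain ⟨-, hYclosed, hYconv, hYsmul, hYcap⟩ := hY
  -- basic cone facts
  have hY0 : (0 : Fin d → ℝ) ∈ Y := by
    have h0 : (0 : Fin d → ℝ) ∈ Y ∩ (-Y) := by rw [hYcap]; rfl
    exact h0.1
  have hYadd : ∀ a ∈ Y, ∀ b ∈ Y, a + b ∈ Y := by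
    intro a ha b hb
    have h2 : ((1 : ℝ)/2) • a + ((1 : ℝ)/2) • b ∈ Y :=
      hYconv ha hb (by norm_num) (by norm_num) (by norm_num)
    have := hYsmul 2 (by norm_num) _ h2
    simpa [smul_add, smul_smul] using this
  have hYsum : ∀ (f : Fin m → (Fin d → ℝ)), (∀ j, f j ∈ Y) → ∑ j, f j ∈ Y := by
    intro f hf
    exact Finset.sum_induction f (· ∈ Y) (fun a b ha hb => hYadd a ha b hb) hY0
      (fun j _ => hf j)
  -- integrability of products
  have hui : ∀ (k : Fin d) (i : Fin m),
      Integrable (fun y => (u k : Ω → ℝ) y * (φ i : Ω → ℝ) y) μ := by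
    intro k i
    have := MeasureTheory.L2.integrable_inner (𝕜 := ℝ) (u k) (φ i)
    simpa [RCLike.inner_apply, starRingEnd_apply, mul_comm] using this
  haveI : NeZero μ := ⟨Measure.measure_univ_pos.mp hμ⟩
  -- the moment vectors belong to Y
  have hvY : ∀ i : Fin m,
      (fun k => ∫ y, (u k : Ω → ℝ) y * (φ i : Ω → ℝ) y ∂μ) ∈ Y := by
    intro i
    set F : Ω → (Fin d → ℝ) := fun y k => (u k : Ω → ℝ) y * (φ i : Ω → ℝ) y with hF
    have hFeq : F = fun y => ∑ k,
        ((u k : Ω → ℝ) y * (φ i : Ω → ℝ) y) • (Pi.single k (1 : ℝ) : Fin d → ℝ) := by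
      funext y
      have : ∀ k : Fin d, ((u k : Ω → ℝ) y * (φ i : Ω → ℝ) y) • (Pi.single k (1 : ℝ) : Fin d → ℝ)
          = Pi.single k ((u k : Ω → ℝ) y * (φ i : Ω → ℝ) y) := by
        intro k
        rw [← Pi.single_smul, smul_eq_mul, mul_one]
      rw [funext this, Finset.univ_sum_single (fun k => (u k : Ω → ℝ) y * (φ i : Ω → ℝ) y)]
    have hFint : Integrable F μ := by
      rw [hFeq]
      exact integrable_finset_sum _ fun k _ => (hui k i).smul_const _
    have hFmem : ∀ᵐ y ∂μ, F y ∈ Y := by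
      filter_upwards [hu, hφpos i] with y huy hφy
      have : F y = ((φ i : Ω → ℝ) y) • (fun k => (u k : Ω → ℝ) y) := by
        funext k; simp [hF, mul_comm]
      rw [this]
      exact hYsmul _ hφy _ huy
    have havg : (⨍ y, F y ∂μ) ∈ Y := hYconv.average_mem hYclosed hFmem hFint
    have ht : (μ Set.univ).toReal ≠ 0 :=
      (ENNReal.toReal_pos hμ.ne' (measure_ne_top μ _)).ne'
    have hIY : (∫ y, F y ∂μ) ∈ Y := by
      have h2 : (μ Set.univ).toReal • (⨍ y, F y ∂μ) = ∫ y, F y ∂μ := by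
        rw [average_eq, measureReal_def, smul_inv_smul₀ ht]
      rw [← h2]
      exact hYsmul _ ENNReal.toReal_nonneg _ havg
    have hIker : (∫ y, F y ∂μ)
        = fun k => ∫ y, (u k : Ω → ℝ) y * (φ i : Ω → ℝ) y ∂μ := by
      rw [hFeq, integral_finset_sum _ fun k _ => (hui k i).smul_const _]
      have : ∀ k : Fin d, (∫ y, ((u k : Ω → ℝ) y * (φ i : Ω → ℝ) y)
            • (Pi.single k (1 : ℝ) : Fin d → ℝ) ∂μ)
          = Pi.single k (∫ y, (u k : Ω → ℝ) y * (φ i : Ω → ℝ) y ∂μ) := by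
        intro k
        rw [integral_smul_const, ← Pi.single_smul, smul_eq_mul, mul_one]
      rw [funext this,
        Finset.univ_sum_single (fun k => ∫ y, (u k : Ω → ℝ) y * (φ i : Ω → ℝ) y ∂μ)]
    rw [← hIker]
    exact hIY
  -- the inverse matrix has nonnegative entries
  choose σ hσ hσu using hProw
  have hσinj : Function.Injective σ := by
    intro a b hab
    obtain ⟨i0, -, hiu⟩ := hPcol (σ a)
    have ha : a = i0 := hiu a (hσ a)
    have hb : b = i0 := hiu b (by rw [hab]; exact hσ b)
    rw [ha, hb]
  have hPinv : P⁻¹ = fun j k => if j = σ k then (P k (σ k))⁻¹ else 0 := by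
    apply Matrix.inv_eq_right_inv
    ext i k
    show ∑ j, P i j * (if j = σ k then (P k (σ k))⁻¹ else 0) = (1 : Matrix (Fin m) (Fin m) ℝ) i k
    have hsum : ∑ j, P i j * (if j = σ k then (P k (σ k))⁻¹ else 0)
        = P i (σ i) * (if σ i = σ k then (P k (σ k))⁻¹ else 0) := by
      apply Finset.sum_eq_single (σ i)
      · intro j _ hj
        have : P i j = 0 := by
          by_contra h
          exact hj (hσu i j h)
        rw [this, zero_mul]
      · intro h; exact absurd (Finset.mem_univ _) h
    rw [hsum]
    by_cases hik : i = k
    · subst hik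
      simp [mul_inv_cancel₀ (hσ i), Matrix.one_apply]
    · have : σ i ≠ σ k := fun h => hik (hσinj h)
      simp [this, Matrix.one_apply, hik]
  have hPinv_nonneg : ∀ i j, 0 ≤ P⁻¹ i j := by
    intro i j
    rw [hPinv]
    by_cases h : i = σ j
    · simp only [h, if_pos rfl]
      exact le_of_lt (inv_pos.mpr (hPpos _ _ (hσ j)))
    · simp [h]
  -- the coefficient vectors belong to Y
  set v : Fin m → (Fin d → ℝ) :=
    fun i k => ∫ y, (u k : Ω → ℝ) y * (φ i : Ω → ℝ) y ∂μ with hv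
  set c : Fin m → (Fin d → ℝ) := fun j => ∑ i, P⁻¹ i j • v i with hc
  have hcY : ∀ j, c j ∈ Y := by
    intro j
    exact hYsum _ fun i => hYsmul _ (hPinv_nonneg i j) _ (hvY i)
  -- pointwise description of the Lp sums
  have hcoe : ∀ k : Fin d, ∀ᵐ x ∂μ,
      ((∑ j, (∑ i, P⁻¹ i j * ∫ y, u k y * φ i y ∂μ) • φ j : Lp ℝ 2 μ) : Ω → ℝ) x
        = ∑ j, (∑ i, P⁻¹ i j * ∫ y, u k y * φ i y ∂μ) * (φ j : Ω → ℝ) x := by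
    intro k
    have h1 := lp_coeFn_sum' Finset.univ (fun j : Fin m =>
      (∑ i, P⁻¹ i j * ∫ y, u k y * φ i y ∂μ) • φ j)
    have h2 : ∀ᵐ x ∂μ, ∀ j : Fin m,
        (((∑ i, P⁻¹ i j * ∫ y, u k y * φ i y ∂μ) • φ j : Lp ℝ 2 μ) : Ω → ℝ) x
          = (∑ i, P⁻¹ i j * ∫ y, u k y * φ i y ∂μ) * (φ j : Ω → ℝ) x := by
      rw [ae_all_iff]
      intro j
      filter_upwards [Lp.coeFn_smul (∑ i, P⁻¹ i j * ∫ y, u k y * φ i y ∂μ) (φ j)]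
        with x hx
      rw [hx]; rfl
    filter_upwards [h1, h2] with x hx1 hx2
    rw [hx1]
    exact Finset.sum_congr rfl fun j _ => hx2 j
  -- conclusion
  have hφposall : ∀ᵐ x ∂μ, ∀ i, (0 : ℝ) ≤ (φ i : Ω → ℝ) x := ae_all_iff.mpr hφpos
  have hcoeall : ∀ᵐ x ∂μ, ∀ k : Fin d,
      ((∑ j, (∑ i, P⁻¹ i j * ∫ y, u k y * φ i y ∂μ) • φ j : Lp ℝ 2 μ) : Ω → ℝ) x
        = ∑ j, (∑ i, P⁻¹ i j * ∫ y, u k y * φ i y ∂μ) * (φ j : Ω → ℝ) x :=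
    ae_all_iff.mpr hcoe
  filter_upwards [hφposall, hcoeall] with x hφx hcoex
  have hrw : (fun k =>
      ((∑ j, (∑ i, P⁻¹ i j * ∫ y, u k y * φ i y ∂μ) • φ j : Lp ℝ 2 μ) : Ω → ℝ) x)
      = ∑ j, ((φ j : Ω → ℝ) x) • c j := by
    funext k
    rw [hcoex k, Finset.sum_apply]
    refine Finset.sum_congr rfl fun j _ => ?_
    have hcjk : c j k = ∑ i, P⁻¹ i j * v i k := by
      simp [hc, Finset.sum_apply]
    simp only [Pi.smul_apply, smul_eq_mul, hcjk, hv]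
    ring
  rw [hrw]
  exact hYsum _ fun j => hYsmul _ (hφx j) _ (hcY j)
end

section
/- Let $\phi_1,\dots,\phi_{d_n} \in L^2(\Omega)$ be a pairwise orthogonal family of nonzero functions with nonnegative values. Then the Bubnov–Galerkin projection $\Pi_n$ on $L^2(\Omega)^d$ determined by the orthogonality conditions $(\pi_n u - u, \phi_i) = 0$, $1 \le i \le d_n$, is $L^2(\Omega)^d_+$-positive, i.e. $\Pi_n(L^2(\Omega)^d_+) \subseteq L^2(\Omega)^d_+$. -/
open MeasureTheory

section Aux

variable {E : Type*} [AddCommGroup E] [Module ℝ E] [TopologicalSpace E]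

lemma cone_zero_mem {C : Set E} (hC : IsOrderCone C) : (0 : E) ∈ C := by
  have h := hC.2.2.2.2
  have : (0 : E) ∈ C ∩ (-C) := by rw [h]; rfl
  exact this.1

lemma cone_add_mem {C : Set E} (hC : IsOrderCone C) {x y : E}
    (hx : x ∈ C) (hy : y ∈ C) : x + y ∈ C := by
  have hconv := hC.2.2.1
  have hmid : (1/2 : ℝ) • x + (1/2 : ℝ) • y ∈ C :=
    hconv hx hy (by norm_num) (by norm_num) (by norm_num)
  have := hC.2.2.2.1 2 (by norm_num) _ hmid
  have heq : (2:ℝ) • ((1/2 : ℝ) • x + (1/2 : ℝ) • y) = x + y := by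
    rw [smul_add, smul_smul, smul_smul]; norm_num
  rwa [heq] at this

lemma cone_sum_mem {ι : Type*} {C : Set E} (hC : IsOrderCone C) (s : Finset ι)
    (f : ι → E) (hf : ∀ i ∈ s, f i ∈ C) : (∑ i ∈ s, f i) ∈ C := by
  classical
  induction s using Finset.induction_on with
  | empty => simpa using cone_zero_mem hC
  | insert _ _ hni ih =>
    rw [Finset.sum_insert hni]
    exact cone_add_mem hC (hf _ (Finset.mem_insert_self _ _))
      (ih fun i hi => hf i (Finset.mem_insert_of_mem hi))

/-- integral of a cone-valued integrable function lies in the cone. -/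
lemma cone_integral_mem {d : ℕ} {Ω : Type*} [MeasurableSpace Ω]
    {μ : Measure Ω} [IsFiniteMeasure μ] (hμ : 0 < μ Set.univ)
    {Y : Set (Fin d → ℝ)} (hY : IsOrderCone Y)
    {f : Ω → Fin d → ℝ} (hf : Integrable f μ) (hmem : ∀ᵐ x ∂μ, f x ∈ Y) :
    (∫ x, f x ∂μ) ∈ Y := by
  haveI : NeZero μ := ⟨MeasureTheory.Measure.measure_univ_ne_zero.mp hμ.ne'⟩
  have havg : (⨍ x, f x ∂μ) ∈ Y := (hY.2.2.1).average_mem hY.2.1 hmem hf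
  have htR : (0:ℝ) < (μ Set.univ).toReal :=
    ENNReal.toReal_pos hμ.ne' (measure_ne_top μ _)
  have h1 : (∫ x, f x ∂μ) = (μ Set.univ).toReal • (⨍ x, f x ∂μ) := by
    rw [average_eq, smul_smul, measureReal_def, mul_inv_cancel₀ htR.ne', one_smul]
  rw [h1]
  exact hY.2.2.2.1 _ htR.le _ havg

end Aux

/-- For a pairwise orthogonal family of nonzero, nonnegative functions
`φ₁, …, φₘ ∈ L²(Ω)`, the Bubnov–Galerkin projection determined by the orthogonality
conditions `(πₙ u - u, φᵢ) = 0` (acting componentwise) is `L²(Ω)^d₊`-positive: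
if `p` is the projection of `u` (i.e. `p` has components in `span{φ₁,…,φₘ}` and
satisfies the orthogonality conditions) and `u ∈ L²(Ω)^d₊`, then `p ∈ L²(Ω)^d₊`. -/
theorem stmt18 {d m : ℕ} {Ω : Type*} [MeasurableSpace Ω]
    (μ : Measure Ω) [IsFiniteMeasure μ] (hμ : 0 < μ Set.univ)
    (Y : Set (Fin d → ℝ)) (hY : IsOrderCone Y)
    (φ : Fin m → Lp ℝ 2 μ) (hφne : ∀ i, φ i ≠ 0)
    (hφorth : ∀ i j, i ≠ j → ∫ x, φ i x * φ j x ∂μ = 0)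
    (hφpos : ∀ i, ∀ᵐ x ∂μ, 0 ≤ φ i x)
    (u p : Fin d → Lp ℝ 2 μ)
    (hrange : ∀ k, p k ∈ Submodule.span ℝ (Set.range φ))
    (horth : ∀ (k : Fin d) (i : Fin m), ∫ x, (p k x - u k x) * φ i x ∂μ = 0)
    (hu : ∀ᵐ x ∂μ, (fun k => u k x) ∈ Y) :
    ∀ᵐ x ∂μ, (fun k => p k x) ∈ Y := by
  classical
  -- integrability of products of L² functions
  have hInt : ∀ f g : Lp ℝ 2 μ, Integrable (fun x => f x * g x) μ := by
    intro f g
    have := L2.integrable_inner (𝕜 := ℝ) g f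
    simpa [RCLike.inner_apply] using this
  -- coefficients of p
  choose a ha using fun k => (Submodule.mem_span_range_iff_exists_fun ℝ).mp (hrange k)
  -- a.e. representation of p k
  have hLpsum : ∀ (c : Fin m → ℝ),
      ⇑(∑ i, c i • φ i) =ᵐ[μ] fun x => ∑ i, c i * φ i x := by
    intro c
    induction (Finset.univ : Finset (Fin m)) using Finset.induction_on with
    | empty =>
      simp only [Finset.sum_empty]
      exact Lp.coeFn_zero ℝ 2 μ
    | @insert j s hjs ih =>
      rw [Finset.sum_insert hjs]
      refine (Lp.coeFn_add _ _).trans ?_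
      filter_upwards [ih, Lp.coeFn_smul (c j) (φ j)] with x hx hx2
      simp only [Pi.add_apply, hx, hx2, Pi.smul_apply, smul_eq_mul,
        Finset.sum_insert hjs]
  have hps : ∀ k, ⇑(p k) =ᵐ[μ] fun x => ∑ i, a k i * φ i x := by
    intro k
    rw [← ha k]
    exact hLpsum (a k)
  -- positivity of the norms
  set N : Fin m → ℝ := fun i => ∫ x, φ i x * φ i x ∂μ with hN
  have hNpos : ∀ i, 0 < N i := by
    intro i
    have h2 : (0:ℝ) < inner ℝ (φ i) (φ i) := by
      rw [real_inner_self_eq_norm_mul_norm]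
      have : 0 < ‖φ i‖ := norm_pos_iff.mpr (hφne i)
      positivity
    rwa [L2.inner_def, show (fun x => (inner ℝ (φ i x) (φ i x) : ℝ))
        = fun x => φ i x * φ i x by funext x; simp [RCLike.inner_apply, sq]] at h2
  -- compute ∫ p k φ i
  have hpint : ∀ k i, ∫ x, p k x * φ i x ∂μ = a k i * N i := by
    intro k i
    have hcongr : ∫ x, p k x * φ i x ∂μ
        = ∫ x, ∑ j, a k j * (φ j x * φ i x) ∂μ := by
      refine integral_congr_ae ?_
      filter_upwards [hps k] with x hx
      rw [hx, Finset.sum_mul]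
      simp [mul_assoc]
    rw [hcongr, integral_finset_sum _ fun j _ => (hInt (φ j) (φ i)).const_mul _]
    have hml : ∀ j, ∫ x, a k j * (φ j x * φ i x) ∂μ = a k j * ∫ x, φ j x * φ i x ∂μ :=
      fun j => integral_const_mul _ _
    simp_rw [hml]
    rw [Finset.sum_eq_single i (fun j _ hji => by rw [hφorth j i hji, mul_zero])
      (fun h => absurd (Finset.mem_univ i) h)]
  -- orthogonality gives ∫ p k φ i = ∫ u k φ i
  have hpu : ∀ k i, ∫ x, p k x * φ i x ∂μ = ∫ x, u k x * φ i x ∂μ := by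
    intro k i
    have h0 := horth k i
    have hsub : ∫ x, (p k x - u k x) * φ i x ∂μ
        = (∫ x, p k x * φ i x ∂μ) - ∫ x, u k x * φ i x ∂μ := by
      rw [← integral_sub (hInt (p k) (φ i)) (hInt (u k) (φ i))]
      congr 1; funext x; ring
    rw [hsub] at h0
    linarith
  -- the coefficient vectors lie in the cone
  set c : Fin m → Fin d → ℝ := fun i k => a k i with hc
  have hcY : ∀ i, c i ∈ Y := by
    intro i
    -- the vector-valued integrand
    set F : Ω → Fin d → ℝ := fun x => fun k => φ i x * u k x with hF
    have hFrep : F = fun x => ∑ k, (φ i x * u k x) • (Pi.single k (1:ℝ) : Fin d → ℝ) := by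
      funext x k'
      simp [hF, Finset.sum_apply, Pi.single_apply]
    have hFint : Integrable F μ := by
      rw [hFrep]
      exact integrable_finset_sum _ fun k _ => (hInt (φ i) (u k)).smul_const _
    have hFmem : ∀ᵐ x ∂μ, F x ∈ Y := by
      filter_upwards [hφpos i, hu] with x hx hux
      have := hY.2.2.2.1 (φ i x) hx _ hux
      exact this
    have hWY : (∫ x, F x ∂μ) ∈ Y := cone_integral_mem hμ hY hFint hFmem
    have hcomp : ∀ k, (∫ x, F x ∂μ) k = ∫ x, φ i x * u k x ∂μ := by
      intro k
      rw [hFrep, integral_finset_sum _ fun k _ => (hInt (φ i) (u k)).smul_const _]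
      simp_rw [integral_smul_const]
      simp [Finset.sum_apply, Pi.single_apply]
    have hcform : c i = (N i)⁻¹ • (∫ x, F x ∂μ) := by
      funext k
      have h1 : a k i * N i = ∫ x, u k x * φ i x ∂μ := by
        rw [← hpint k i, hpu k i]
      have h2 : (∫ x, F x ∂μ) k = ∫ x, u k x * φ i x ∂μ := by
        rw [hcomp k]; congr 1; funext x; ring
      have h3 : a k i = (N i)⁻¹ * (a k i * N i) := by
        rw [mul_comm (a k i) (N i), ← mul_assoc, inv_mul_cancel₀ (hNpos i).ne', one_mul]
      rw [h1] at h3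
      show a k i = ((N i)⁻¹ • (∫ x, F x ∂μ)) k
      simp only [Pi.smul_apply, smul_eq_mul, h2]
      exact h3
    rw [hcform]
    exact hY.2.2.2.1 _ (inv_nonneg.mpr (hNpos i).le) _ hWY
  -- conclude: a.e., p(x) = ∑ i (φ i x) • c i ∈ Y
  have hφposall : ∀ᵐ x ∂μ, ∀ i, 0 ≤ φ i x := ae_all_iff.mpr hφpos
  have hpsall : ∀ᵐ x ∂μ, ∀ k, p k x = ∑ i, a k i * φ i x := ae_all_iff.mpr hps
  filter_upwards [hφposall, hpsall] with x hpos hrep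
  have : (fun k => p k x) = ∑ i, (φ i x) • c i := by
    funext k
    rw [hrep k]
    simp [Finset.sum_apply, hc, mul_comm]
  rw [this]
  exact cone_sum_mem hY _ _ fun i _ => hY.2.2.2.1 _ (hpos i) _ (hcY i)
end
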